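/- Let a and b be positive integers and let l = a mod b with 2 ≤ l (so b ≥ 3). Then D_2(a;b) = ∑_{j=1}^{b−1} j²·(f_{a;b}(j) − ⌊a/b⌋) = ∑_{m=1}^{l−1} ⌊m·b/l⌋²; in particular D_2(a;b) = l·M_2(l;b) depends on a only through l ≡ a mod b. -/

import Mathlib

/-- `f_{a;b}(j)`: the number of `m ∈ {0,…,a-1}` with `⌊m·b/a⌋ = j`. -/
def freq (a b j : ℕ) : ℕ := ((Finset.range a).filter (fun m => m * b / a = j)).card

/-- ceiling division characterization: `⌈x/b⌉ ≤ m ↔ x ≤ m·b`. -/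
lemma ceil_le_iff {b x m : ℕ} (hb : 0 < b) : (x + b - 1) / b ≤ m ↔ x ≤ m * b := by
  rw [← Nat.lt_succ_iff, Nat.div_lt_iff_lt_mul hb, Nat.succ_mul]
  omega

lemma lt_ceil_iff {b x m : ℕ} (hb : 0 < b) : m < (x + b - 1) / b ↔ m * b < x := by
  rw [← not_le, ceil_le_iff hb, not_le]

/-- frequency as difference of ceilings. -/
lemma freq_eq {a b : ℕ} (ha : 0 < a) (hb : 0 < b) {j : ℕ} (hj : j < b) :
    freq a b j = (a * (j + 1) + b - 1) / b - (a * j + b - 1) / b := by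
  have hC : ((Finset.range a).filter (fun m => m * b / a = j))
      = Finset.Ico ((a * j + b - 1) / b) ((a * (j + 1) + b - 1) / b) := by
    ext m
    simp only [Finset.mem_filter, Finset.mem_range, Finset.mem_Ico]
    rw [ceil_le_iff hb, lt_ceil_iff hb]
    constructor
    · rintro ⟨hma, hdiv⟩
      subst hdiv
      exact ⟨by simpa [mul_comm] using Nat.div_mul_le_self (m * b) a,
        by simpa [mul_comm (m*b) a] using Nat.lt_mul_div_succ (m * b) ha⟩
    · rintro ⟨h1, h2⟩
      have hma : m < a := by
        have : m * b < a * b := lt_of_lt_of_le h2 (by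
          have : j + 1 ≤ b := hj
          exact Nat.mul_le_mul_left a this)
        exact lt_of_mul_lt_mul_right this (Nat.zero_le b)
      refine ⟨hma, Nat.div_eq_of_lt_le (by linarith [h1]) ?_⟩
      calc m * b < a * (j + 1) := h2
        _ = (j + 1) * a := mul_comm _ _
  rw [freq, hC, Nat.card_Ico]

theorem D2_key (a b : ℕ) (ha : 0 < a) (hb : 0 < b)
    (l : ℕ) (hl : l = a % b) (h2 : 2 ≤ l) :
    (∑ j ∈ Finset.Icc 1 (b - 1), (j : ℤ) ^ 2 * ((freq a b j : ℤ) - ((a / b : ℕ) : ℤ)))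
        = ∑ m ∈ Finset.Icc 1 (l - 1), ((m * b / l : ℕ) : ℤ) ^ 2 := by
  have hl0 : 0 < l := by omega
  have hlb : l < b := hl ▸ Nat.mod_lt a hb
  set q := a / b with hq
  have hab : a = q * b + l := by
    rw [hq, hl, mul_comm]; exact (Nat.div_add_mod a b).symm
  set cn : ℕ → ℕ := fun j => (l * j + b - 1) / b with hcn
  -- decomposition of the ceiling function
  have hCdec : ∀ j : ℕ, (a * j + b - 1) / b = q * j + cn j := by
    intro j
    have : a * j + b - 1 = (l * j + b - 1) + (q * j) * b := by
      rw [hab]; ring_nf; omega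
    rw [this, Nat.add_mul_div_right _ _ hb, hcn]
    simp only []
    omega
  -- cn is monotone step function with steps 0 or 1
  have hmono : ∀ j : ℕ, cn j ≤ cn (j + 1) := by
    intro j
    apply Nat.div_le_div_right
    have : l * j ≤ l * (j + 1) := Nat.mul_le_mul_left l (by omega)
    omega
  have hstep : ∀ j : ℕ, cn (j + 1) ≤ cn j + 1 := by
    intro j
    have h1 : l * (j + 1) + b - 1 ≤ (l * j + b - 1) + b := by
      have : l * (j + 1) = l * j + l := by ring
      omega
    calc cn (j + 1) ≤ ((l * j + b - 1) + b) / b := Nat.div_le_div_right h1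
      _ = cn j + 1 := Nat.add_div_right _ hb
  -- rewrite each term of the sum
  have hterm : ∀ j ∈ Finset.Icc 1 (b - 1),
      (j : ℤ) ^ 2 * ((freq a b j : ℤ) - (q : ℤ))
        = (if cn j < cn (j + 1) then (j : ℤ) ^ 2 else 0) := by
    intro j hj
    rw [Finset.mem_Icc] at hj
    have hjb : j < b := by omega
    have hfr := freq_eq ha hb hjb
    have hle : (a * j + b - 1) / b ≤ (a * (j + 1) + b - 1) / b := by
      rw [hCdec, hCdec]
      have e1 := hmono j
      have e2 : q * j ≤ q * (j + 1) := Nat.mul_le_mul_left q (by omega)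
      omega
    have hfrz : (freq a b j : ℤ) - (q : ℤ) = (cn (j + 1) : ℤ) - (cn j : ℤ) := by
      rw [hfr]
      rw [Nat.cast_sub hle, hCdec, hCdec]
      push_cast
      ring
    rw [hfrz]
    have hm := hmono j
    have hs := hstep j
    by_cases hlt : cn j < cn (j + 1)
    · have heq1 : cn (j + 1) = cn j + 1 := by omega
      rw [if_pos hlt, heq1]
      push_cast; ring
    · have heq0 : cn (j + 1) = cn j := by omega
      rw [if_neg hlt, heq0]
      ring
  rw [Finset.sum_congr rfl hterm, ← Finset.sum_filter]
  -- the set of jump points is the image of m ↦ m*b/l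
  have himg : (Finset.Icc 1 (b - 1)).filter (fun j => cn j < cn (j + 1))
      = (Finset.Icc 1 (l - 1)).image (fun m => m * b / l) := by
    ext j
    simp only [Finset.mem_filter, Finset.mem_Icc, Finset.mem_image]
    constructor
    · rintro ⟨⟨hj1, hj2⟩, hlt⟩
      refine ⟨cn j, ⟨?_, ?_⟩, ?_⟩
      · -- 1 ≤ cn j
        have e1 : l * j ≤ cn j * b := (ceil_le_iff hb).mp (le_refl _)
        have hlj : 0 < l * j := Nat.mul_pos hl0 (by omega)
        rcases Nat.eq_zero_or_pos (cn j) with h0 | h1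
        · rw [h0] at e1; omega
        · exact h1
      · -- cn j ≤ l - 1
        have h2' : cn j * b < l * (j + 1) := (lt_ceil_iff hb).mp hlt
        have e3 : l * (j + 1) ≤ l * b := Nat.mul_le_mul_left l (by omega)
        have e4 : cn j * b < l * b := by omega
        have e5 : cn j < l := lt_of_mul_lt_mul_right e4 (Nat.zero_le b)
        omega
      · -- cn j * b / l = j
        have h1' : l * j ≤ cn j * b := (ceil_le_iff hb).mp (le_refl _)
        have h2' : cn j * b < l * (j + 1) := (lt_ceil_iff hb).mp hlt
        exact Nat.div_eq_of_lt_le (by rw [mul_comm j l]; exact h1')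
          (by rw [mul_comm (j + 1) l]; exact h2')
    · rintro ⟨m, ⟨hm1, hm2⟩, hjm⟩
      set j' := m * b / l with hj'
      have h1' : j' * l ≤ m * b := Nat.div_mul_le_self _ _
      have h2' : m * b < l * (j' + 1) := Nat.lt_mul_div_succ _ hl0
      have hcnle : cn j' ≤ m := (ceil_le_iff hb).mpr (by rw [mul_comm] at h1'; omega)
      have hcnlt : m < cn (j' + 1) := (lt_ceil_iff hb).mpr h2'
      have hj1 : 1 ≤ j' := by
        rw [hj']
        rw [Nat.le_div_iff_mul_le hl0]
        have : l ≤ b := le_of_lt hlb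
        calc 1 * l = l := one_mul l
          _ ≤ b := this
          _ ≤ m * b := Nat.le_mul_of_pos_left b (by omega)
      have hj2 : j' ≤ b - 1 := by
        have : m * b < b * l := by
          have : m < l := by omega
          calc m * b < l * b := (Nat.mul_lt_mul_right hb).mpr this
            _ = b * l := mul_comm _ _
        have : j' < b := by rw [hj', Nat.div_lt_iff_lt_mul hl0]; omega
        omega
      subst hjm
      exact ⟨⟨hj1, hj2⟩, lt_of_le_of_lt hcnle hcnlt⟩
  rw [himg]
  rw [Finset.sum_image]
  -- injectivity via the left inverse cn
  intro m1 hm1 m2 hm2 heq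
  have key : ∀ m ∈ Finset.Icc 1 (l - 1), cn (m * b / l) = m := by
    intro m hm
    rw [Finset.mem_Icc] at hm
    set j' := m * b / l with hj'
    have h1' : j' * l ≤ m * b := Nat.div_mul_le_self _ _
    have h2' : m * b < l * (j' + 1) := Nat.lt_mul_div_succ _ hl0
    have hcnle : cn j' ≤ m := (ceil_le_iff hb).mpr (by rw [mul_comm] at h1'; omega)
    have hcnlt : m < cn (j' + 1) := (lt_ceil_iff hb).mpr h2'
    have := hstep j'
    omega
  have e1 := key m1 hm1
  have e2 := key m2 hm2
  have heq' : m1 * b / l = m2 * b / l := heq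
  rw [heq'] at e1
  exact e1.symm.trans e2

theorem D2_eq_sum_and_moment (a b : ℕ) (ha : 0 < a) (hb : 0 < b)
    (l : ℕ) (hl : l = a % b) (h2 : 2 ≤ l) :
    (∑ j ∈ Finset.Icc 1 (b - 1), (j : ℤ) ^ 2 * ((freq a b j : ℤ) - ((a / b : ℕ) : ℤ)))
        = ∑ m ∈ Finset.Icc 1 (l - 1), ((m * b / l : ℕ) : ℤ) ^ 2
    ∧ (∑ j ∈ Finset.Icc 1 (b - 1), (j : ℚ) ^ 2 * ((freq a b j : ℚ) - ((a / b : ℕ) : ℚ)))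
        = (l : ℚ) * ((1 / (l : ℚ)) * ∑ m ∈ Finset.range l, ((m * b / l : ℕ) : ℚ) ^ 2) := by
  have hZ := D2_key a b ha hb l hl h2
  refine ⟨hZ, ?_⟩
  have hl0 : (l : ℚ) ≠ 0 := by positivity
  rw [← mul_assoc, mul_one_div, div_self hl0, one_mul]
  -- reduce range l sum to Icc 1 (l-1)
  have hrange : (∑ m ∈ Finset.range l, ((m * b / l : ℕ) : ℚ) ^ 2)
      = ∑ m ∈ Finset.Icc 1 (l - 1), ((m * b / l : ℕ) : ℚ) ^ 2 := by
    have h1 : Finset.range l = Finset.Ico 0 l := by rw [Finset.range_eq_Ico]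
    have h2' : Finset.Icc 1 (l - 1) = Finset.Ico 1 l := by
      ext x; simp only [Finset.mem_Icc, Finset.mem_Ico]; omega
    rw [h1, h2', Finset.sum_eq_sum_Ico_succ_bot (by omega : 0 < l)]
    norm_num
  rw [hrange]
  -- cast the integer identity to ℚ
  have := congrArg (fun x : ℤ => (x : ℚ)) hZ
  push_cast at this ⊢
  convert this using 2 <;> norm_cast
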